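/- A read/write register object over a value domain containing at least two distinct values is doubly-perturbing: the write operation write_p(v₁) by process p is perturbing with respect to read_q after the empty history, and the history write_p(v₁) ∘ read_q extends (p-freely, by write_q(v₀)) to a history H₂ after which write_p(v₁) is again perturbing with respect to read_q. -/
import Mathlib


/-- Operations of a read/write register over value domain `V`. -/
inductive RegOp (V : Type) : Type
  | write (v : V)
  | read

/-- State transition of a register operation. -/
def regStep {V : Type} : RegOp V → V → V
  | .write v, _ => v
  | .read, s => s

/-- Response of a register operation (`none` is the ack of a write). -/
def regResp {V : Type} : RegOp V → V → Option V
  | .write _, _ => none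
  | .read, s => some s

/-- State reached by applying a sequential history from initial value `init`. -/
def regRun {V : Type} (init : V) (H : List (RegOp V)) : V :=
  H.foldl (fun s op => regStep op s) init

/-- `opp` is perturbing with respect to `opq` after history `H`. -/
def regPerturbing {V : Type} (init : V) (opp opq : RegOp V) (H : List (RegOp V)) : Prop :=
  regResp opq (regRun init (H ++ [opp])) ≠ regResp opq (regRun init H)

/-- A read/write register with two distinct values is doubly-perturbing,
witnessed by `write v₁`: it is perturbing w.r.t. `read` after the empty
history, and again after `write_p(v₁) ∘ read_q ∘ write_q(v₀)`. -/
theorem stmt2 {V : Type} (v0 v1 : V) (h : v0 ≠ v1) :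
    regPerturbing v0 (RegOp.write v1) RegOp.read [] ∧
    regPerturbing v0 (RegOp.write v1) RegOp.read
      [RegOp.write v1, RegOp.read, RegOp.write v0] := by
  constructor <;> simp [regPerturbing, regRun, regStep, regResp] <;> exact fun e => h e.symm
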